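/- Let H be a subgroup of a nontrivial finite solvable group G. If the Fitting height of H equals the Fitting height of G, then S(H) ≤ S(G) ≤ F(G), where S(X) denotes the smallest normal subgroup of X whose quotient has smaller Fitting height than X. -/

import Mathlib

/-- `FittingHeightLe n G` says the group `G` has a normal series of length at most `n`
with nilpotent quotients, i.e. Fitting height at most `n`. -/
def FittingHeightLe : ℕ → ∀ (G : Type) [Group G], Prop
  | 0, G, _ => Subsingleton G
  | (n+1), G, _ => ∃ (N : Subgroup G) (hN : N.Normal), Group.IsNilpotent N ∧
      (letI := hN; FittingHeightLe n (G ⧸ N))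

/-- The Fitting height of a group (junk value if no bound exists). -/
noncomputable def fittingHeight (G : Type) [Group G] : ℕ :=
  sInf {n | FittingHeightLe n G}

/-- `SG G` is the intersection of all normal subgroups of `G` whose quotient has
Fitting height strictly smaller than that of `G`. -/
noncomputable def SG (G : Type) [Group G] : Subgroup G :=
  sInf {K : Subgroup G | ∃ hK : K.Normal,
    (letI := hK; fittingHeight (G ⧸ K)) < fittingHeight G}

/-- The Fitting subgroup: the join of all nilpotent normal subgroups. -/
def FittingSub (G : Type) [Group G] : Subgroup G :=
  ⨆ (N : Subgroup G) (_ : N.Normal) (_ : Group.IsNilpotent N), N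

/-- Fitting height bounds transfer along injective homomorphisms. -/
lemma fhle_of_injective : ∀ (n : ℕ) (G H : Type) [Group G] [Group H] (f : H →* G),
    Function.Injective f → FittingHeightLe n G → FittingHeightLe n H := by
  intro n
  induction n with
  | zero =>
    intro G H _ _ f hf hG
    haveI : Subsingleton G := hG
    exact ⟨fun a b => hf (Subsingleton.elim _ _)⟩
  | succ n ih =>
    intro G H _ _ f hf hG
    obtain ⟨N, hN, hnil, hq⟩ := hG
    letI := hN
    refine ⟨N.comap f, hN.comap f, ?_, ?_⟩
    · -- N.comap f is nilpotent: it embeds into N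
      let φ : N.comap f →* N :=
        (f.comp (N.comap f).subtype).codRestrict N (fun x => x.2)
      have hφ : Function.Injective φ := by
        intro a b hab
        exact Subtype.ext (hf (congrArg Subtype.val hab))
      haveI : Group.IsNilpotent φ.range := Subgroup.isNilpotent _
      exact nilpotent_of_mulEquiv (MonoidHom.ofInjective hφ).symm
    · -- the quotient embeds into G ⧸ N
      have hker : ((QuotientGroup.mk' N).comp f).ker = N.comap f := by
        rw [← MonoidHom.comap_ker, QuotientGroup.ker_mk']
      let e₀ := QuotientGroup.quotientMulEquivOfEq hker.symm
      let e := QuotientGroup.quotientKerEquivRange ((QuotientGroup.mk' N).comp f)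
      let ψ : (H ⧸ N.comap f) →* (G ⧸ N) :=
        ((Subgroup.subtype _).comp e.toMonoidHom).comp e₀.toMonoidHom
      have hψ : Function.Injective ψ :=
        (Subtype.coe_injective.comp e.injective).comp e₀.injective
      exact ih _ _ ψ hψ hq

/-- A group whose derived series reaches ⊥ in `n` steps has Fitting height at most `n`. -/
lemma fhle_of_derived : ∀ (n : ℕ) (G : Type) [Group G],
    derivedSeries G n = ⊥ → FittingHeightLe n G := by
  intro n
  induction n with
  | zero =>
    intro G _ h
    rw [derivedSeries_zero] at h
    refine ⟨fun a b => ?_⟩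
    have ha : a ∈ (⊥ : Subgroup G) := h ▸ Subgroup.mem_top a
    have hb : b ∈ (⊥ : Subgroup G) := h ▸ Subgroup.mem_top b
    rw [Subgroup.mem_bot] at ha hb
    rw [ha, hb]
  | succ n ih =>
    intro G _ h
    set N := derivedSeries G n with hNdef
    haveI hN : N.Normal := derivedSeries_normal G n
    have habel : ⁅N, N⁆ = ⊥ := h
    refine ⟨N, hN, ?_, ?_⟩
    · -- N is abelian, hence nilpotent
      have hcent : N ≤ Subgroup.centralizer N :=
        Subgroup.commutator_eq_bot_iff_le_centralizer.mp habel
      letI : CommGroup N :=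
        { (inferInstance : Group N) with
          mul_comm := fun a b => by
            ext
            simp only [Subgroup.coe_mul]
            exact Subgroup.mem_centralizer_iff.mp (hcent b.2) a a.2 }
      infer_instance
    · apply ih
      have hmap := map_derivedSeries_eq (f := QuotientGroup.mk' N)
        (QuotientGroup.mk'_surjective N) n
      rw [← hmap, ← hNdef, Subgroup.map_eq_bot_iff, QuotientGroup.ker_mk']

lemma fhle_exists (G : Type) [Group G] [hs : Group.IsSolvable G] :
    ∃ n, FittingHeightLe n G := by
  obtain ⟨n, hn⟩ := hs.solvable
  exact ⟨n, fhle_of_derived n G hn⟩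

lemma fhle_fittingHeight (G : Type) [Group G] [Group.IsSolvable G] :
    FittingHeightLe (fittingHeight G) G := by
  have h := Nat.sInf_mem (s := {n | FittingHeightLe n G})
    (Set.nonempty_of_mem (fhle_exists G).choose_spec)
  exact h

theorem statement_2 (G : Type) [Group G] [Finite G] [Nontrivial G]
    (hsol : IsSolvable G) (H : Subgroup G)
    (hfh : fittingHeight H = fittingHeight G) :
    (SG H).map H.subtype ≤ SG G ∧ SG G ≤ FittingSub G := by
  haveI : Group.IsSolvable G := hsol
  constructor
  · -- S(H) ≤ S(G)
    refine le_sInf fun K hK => ?_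
    obtain ⟨hKn, hKlt⟩ := hK
    letI := hKn
    haveI : Group.IsSolvable (G ⧸ K) := inferInstance
    set M : Subgroup H := K.comap H.subtype with hMdef
    haveI hMn : M.Normal := hKn.comap H.subtype
    -- H ⧸ M embeds into G ⧸ K
    have hfle : FittingHeightLe (fittingHeight (G ⧸ K)) (H ⧸ M) := by
      have hker : ((QuotientGroup.mk' K).comp H.subtype).ker = M := by
        rw [hMdef, ← MonoidHom.comap_ker, QuotientGroup.ker_mk']
      let e₀ := QuotientGroup.quotientMulEquivOfEq hker.symm
      let e := QuotientGroup.quotientKerEquivRange ((QuotientGroup.mk' K).comp H.subtype)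
      let ψ : (H ⧸ M) →* (G ⧸ K) :=
        ((Subgroup.subtype _).comp e.toMonoidHom).comp e₀.toMonoidHom
      exact fhle_of_injective _ _ _ ψ
        ((Subtype.coe_injective.comp e.injective).comp e₀.injective)
        (fhle_fittingHeight (G ⧸ K))
    have hlt : (letI := hMn; fittingHeight (H ⧸ M)) < fittingHeight H := by
      calc fittingHeight (H ⧸ M) ≤ fittingHeight (G ⧸ K) := Nat.sInf_le hfle
        _ < fittingHeight G := hKlt
        _ = fittingHeight H := hfh.symm
    have hle : SG H ≤ M := sInf_le ⟨hMn, hlt⟩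
    calc (SG H).map H.subtype ≤ M.map H.subtype := Subgroup.map_mono hle
      _ = (K.comap H.subtype).map H.subtype := by rw [hMdef]
      _ ≤ K := Subgroup.map_comap_le _ _
  · -- S(G) ≤ F(G)
    have h1 : 1 ≤ fittingHeight G := by
      by_contra h
      push_neg at h
      have hG : fittingHeight G = 0 := by omega
      have h0 : FittingHeightLe 0 G := hG ▸ fhle_fittingHeight G
      haveI : Subsingleton G := h0
      exact (not_subsingleton G) this
    obtain ⟨m, hm⟩ : ∃ m, fittingHeight G = m + 1 :=
      ⟨fittingHeight G - 1, by omega⟩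
    have hfle := fhle_fittingHeight G
    rw [hm] at hfle
    obtain ⟨N, hN, hnil, hq⟩ := hfle
    letI := hN
    have hNmem : N ∈ {K : Subgroup G | ∃ hK : K.Normal,
        (letI := hK; fittingHeight (G ⧸ K)) < fittingHeight G} := by
      refine ⟨hN, ?_⟩
      calc fittingHeight (G ⧸ N) ≤ m := Nat.sInf_le hq
        _ < fittingHeight G := by omega
    calc SG G ≤ N := sInf_le hNmem
      _ ≤ FittingSub G := by
        apply le_iSup_of_le N
        apply le_iSup_of_le hN
        exact le_iSup_of_le hnil le_rfl
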